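/- Let B be a bicategory, let i : X ⟶ Y and r : Y ⟶ X be 1-cells, and let ε : i ∘ r ⟶ 𝟙_Y be a 2-cell (where i ∘ r denotes the composite 1-cell Y → X → Y). Suppose that the whiskered 2-cells r ∘ ε : r ∘ (i ∘ r) ⟶ r and ε ∘ i : (i ∘ r) ∘ i ⟶ i are invertible (modulo the associativity and unitor constraints of B), and that there exists an invertible 2-cell 𝟙_X ≅ r ∘ i. Then there is an adjunction i ⊣ r in the bicategory B whose counit is ε and whose unit is an invertible 2-cell. -/

import Mathlib

open CategoryTheory CategoryTheory.Bicategory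

open scoped CategoryTheory.Bicategory

lemma stmt0_lz_shift {B : Type*} [Bicategory B] {X Y : B} {i : X ⟶ Y} {r : Y ⟶ X}
    (ε' : r ≫ i ⟶ 𝟙 Y) (σh : 𝟙 X ⟶ i ≫ r) (g : i ⟶ i) :
    leftZigzag (σh ≫ g ▷ r) ε' = leftZigzag σh ε' ≫ g ▷ 𝟙 Y := by
  dsimp only [leftZigzag]
  calc
    _ = σh ▷ i ⊗≫ (g ▷ (r ≫ i) ≫ i ◁ ε') ⊗≫ 𝟙 _ := by bicategory
    _ = σh ▷ i ⊗≫ (i ◁ ε' ≫ g ▷ 𝟙 Y) ⊗≫ 𝟙 _ := by rw [← whisker_exchange]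
    _ = _ := by bicategory

/-- In a bicategory `B`, given 1-cells `i : X ⟶ Y`, `r : Y ⟶ X` and a
2-cell `ε : r ≫ i ⟶ 𝟙 Y` (in the paper's notation, `ε : i ∘ r ⟹ 1_Y`), if the whiskerings
`ε ▷ r` (the paper's `rε`) and `i ◁ ε` (the paper's `εi`) are invertible and there exists an
invertible 2-cell `𝟙 X ≅ i ≫ r`, then there is an adjunction `i ⊣ r` in `B` whose counit is
`ε` and whose unit is invertible. -/
theorem stmt0 {B : Type*} [Bicategory B] {X Y : B} (i : X ⟶ Y) (r : Y ⟶ X)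
    (ε' : r ≫ i ⟶ 𝟙 Y) (h₁ : IsIso (ε' ▷ r)) (h₂ : IsIso (i ◁ ε'))
    (h₃ : Nonempty (𝟙 X ≅ i ≫ r)) :
    ∃ adj : Bicategory.Adjunction i r, adj.counit = ε' ∧ IsIso adj.unit := by
  obtain ⟨σ⟩ := h₃
  -- the left zigzag of `σ.hom` is invertible
  have hlz : leftZigzag σ.hom ε' = σ.hom ▷ i ≫ (α_ i r i).hom ≫ i ◁ ε' := by
    dsimp only [leftZigzag]
    bicategory
  haveI : IsIso (leftZigzag σ.hom ε') := by rw [hlz]; infer_instance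
  set γ : i ⟶ i := (λ_ i).inv ≫ leftZigzag σ.hom ε' ≫ (ρ_ i).hom with hγ
  haveI : IsIso γ := by rw [hγ]; infer_instance
  have hγ' : leftZigzag σ.hom ε' = (λ_ i).hom ≫ γ ≫ (ρ_ i).inv := by
    rw [hγ]; simp
  -- the unit
  set η : 𝟙 X ⟶ i ≫ r := σ.hom ≫ inv γ ▷ r with hη
  haveI : IsIso η := by rw [hη]; infer_instance
  -- left triangle
  have hL : leftZigzag η ε' = (λ_ i).hom ≫ (ρ_ i).inv := by
    rw [hη, stmt0_lz_shift, hγ', Bicategory.whiskerRight_id]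
    simp
  -- right zigzag is invertible
  have hrz : rightZigzag η ε' = r ◁ η ≫ (α_ r i r).inv ≫ ε' ▷ r := by
    dsimp only [rightZigzag]
    bicategory
  haveI : IsIso (rightZigzag η ε') := by rw [hrz]; infer_instance
  -- right triangle
  have hR : rightZigzag η ε' = (ρ_ r).hom ≫ (λ_ r).inv := by
    rw [← cancel_epi (rightZigzag η ε' ≫ (λ_ r).hom ≫ (ρ_ r).inv)]
    calc
      _ = rightZigzag η ε' ⊗≫ rightZigzag η ε' := by bicategory
      _ = rightZigzag η ε' := rightZigzag_idempotent_of_left_triangle _ _ hL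
      _ = _ := by simp
  exact ⟨⟨η, ε', hL, hR⟩, rfl, inferInstance⟩
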